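/- (Mean value theorem for divided differences.) Let n ≥ 2 and let x_1, …, x_n be pairwise distinct real numbers with m := min_i x_i and M := max_i x_i. Let f be continuous on [m, M] and (n−1)-times continuously differentiable on (m, M). Then there exists x_0 ∈ (m, M) such that the divided difference [x_1, …, x_n; f] := ∑_{i=1}^n f(x_i) / ∏_{j=1, j≠i}^n (x_i − x_j) equals f^{(n−1)}(x_0) / (n−1)!. -/

import Mathlib

open Finset

lemma contDiff_polyeval (k : ℕ) (p : Polynomial ℝ) :
    ContDiff ℝ k (fun y => Polynomial.eval y p) := by
  induction p using Polynomial.induction_on' with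
  | add p q hp hq => simpa [Polynomial.eval_add] using hp.add hq
  | monomial m a =>
      simpa [Polynomial.eval_monomial] using
        (contDiff_const (c := a)).mul ((contDiff_id (𝕜 := ℝ)).pow m)

lemma iteratedDeriv_polyeval (k : ℕ) : ∀ p : Polynomial ℝ,
    iteratedDeriv k (fun y => Polynomial.eval y p) =
      fun y => Polynomial.eval y (Polynomial.derivative^[k] p) := by
  induction k with
  | zero => intro p; simp [iteratedDeriv_zero]
  | succ k ih =>
      intro p
      rw [iteratedDeriv_succ']
      have h : deriv (fun y => Polynomial.eval y p) =
          fun y => Polynomial.eval y (Polynomial.derivative p) :=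
        funext fun y => Polynomial.deriv _
      rw [h, ih, Function.iterate_succ_apply]

lemma iteratedDerivWithin_isOpen_eq {s : Set ℝ} (hs : IsOpen s) (k : ℕ) (f : ℝ → ℝ)
    {x : ℝ} (hx : x ∈ s) : iteratedDerivWithin k f s x = iteratedDeriv k f x := by
  rw [iteratedDerivWithin_eq_iteratedFDerivWithin, iteratedDeriv_eq_iteratedFDeriv,
    iteratedFDerivWithin_of_isOpen k hs hx]

lemma rolle_step (g : ℝ → ℝ) (k : ℕ) (t : Finset ℝ) (hcard : t.card = k + 2)
    (hcont : ∀ a ∈ t, ∀ b ∈ t, ContinuousOn g (Set.Icc a b))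
    (hzero : ∀ y ∈ t, g y = 0) :
    ∃ u : Finset ℝ, u.card = k + 1 ∧ (∀ z ∈ u, ∃ a ∈ t, ∃ b ∈ t, a < z ∧ z < b) ∧
      ∀ y ∈ u, deriv g y = 0 := by
  let e := t.orderIsoOfFin hcard
  have key : ∀ i : Fin (k + 1),
      ∃ c ∈ Set.Ioo (e i.castSucc : ℝ) (e i.succ : ℝ), deriv g c = 0 := by
    intro i
    have hab : (e i.castSucc : ℝ) < (e i.succ : ℝ) := by
      exact_mod_cast e.strictMono Fin.castSucc_lt_succ
    exact exists_deriv_eq_zero hab (hcont _ (e i.castSucc).2 _ (e i.succ).2)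
      (by rw [hzero _ (e i.castSucc).2, hzero _ (e i.succ).2])
  choose c hc hc0 using key
  have hmono : StrictMono c := by
    intro i j hij
    have h1 : i.succ ≤ j.castSucc := by
      rw [Fin.le_def]
      simp only [Fin.val_succ, Fin.coe_castSucc]
      omega
    calc c i < (e i.succ : ℝ) := (hc i).2
      _ ≤ (e j.castSucc : ℝ) := by exact_mod_cast e.monotone h1
      _ < c j := (hc j).1
  refine ⟨Finset.image c Finset.univ, ?_, ?_, ?_⟩
  · rw [Finset.card_image_of_injective _ hmono.injective, Finset.card_univ, Fintype.card_fin]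
  · intro z hz
    obtain ⟨i, _, rfl⟩ := Finset.mem_image.mp hz
    exact ⟨e i.castSucc, (e i.castSucc).2, e i.succ, (e i.succ).2, (hc i).1, (hc i).2⟩
  · intro y hy
    obtain ⟨i, _, rfl⟩ := Finset.mem_image.mp hy
    exact hc0 i

lemma rolle_iter (m M : ℝ) : ∀ (k : ℕ) (g : ℝ → ℝ),
    (∀ j, j ≤ k → ContinuousOn (iteratedDeriv j g) (Set.Ioo m M)) →
    ∀ t : Finset ℝ, t.card = k + 1 → (∀ y ∈ t, y ∈ Set.Ioo m M) → (∀ y ∈ t, g y = 0) →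
    ∃ c ∈ Set.Ioo m M, iteratedDeriv k g c = 0 := by
  intro k
  induction k with
  | zero =>
      intro g _ t hcard hsub hz
      obtain ⟨y, hy⟩ := Finset.card_pos.mp (by omega : 0 < t.card)
      exact ⟨y, hsub y hy, by simpa [iteratedDeriv_zero] using hz y hy⟩
  | succ k ih =>
      intro g hcont t hcard hsub hz
      obtain ⟨u, hucard, humem, huz⟩ := rolle_step g k t (by omega)
        (fun a ha b hb => by
          have h0 : ContinuousOn g (Set.Ioo m M) := by
            simpa [iteratedDeriv_zero] using hcont 0 (by omega)
          exact h0.mono fun z hz' =>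
            ⟨(hsub a ha).1.trans_le hz'.1, hz'.2.trans_lt (hsub b hb).2⟩) hz
      have husub : ∀ z ∈ u, z ∈ Set.Ioo m M := by
        intro z hzu
        obtain ⟨a, ha, b, hb, h1, h2⟩ := humem z hzu
        exact ⟨(hsub a ha).1.trans h1, h2.trans (hsub b hb).2⟩
      obtain ⟨c, hcS, hc0⟩ := ih (deriv g)
        (fun j hj => by
          have h := hcont (j + 1) (by omega)
          rwa [iteratedDeriv_succ'] at h) u hucard husub huz
      exact ⟨c, hcS, by rwa [iteratedDeriv_succ']⟩

theorem mean_value_divided_differences (n : ℕ) (hn : 2 ≤ n) (x : Fin n → ℝ)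
    (hinj : Function.Injective x) (f : ℝ → ℝ) (m M : ℝ)
    (hm : m = Finset.univ.inf' ⟨⟨0, by omega⟩, Finset.mem_univ _⟩ x)
    (hM : M = Finset.univ.sup' ⟨⟨0, by omega⟩, Finset.mem_univ _⟩ x)
    (hf : ContinuousOn f (Set.Icc m M))
    (hf' : ContDiffOn ℝ (n - 1) f (Set.Ioo m M)) :
    ∃ x₀ ∈ Set.Ioo m M,
      ∑ i, f (x i) / (∏ j ∈ Finset.univ.erase i, (x i - x j)) =
        iteratedDerivWithin (n - 1) f (Set.Ioo m M) x₀ / (n - 1).factorial := by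
  set S := Set.Ioo m M with hSdef
  have hS : IsOpen S := isOpen_Ioo
  have hcast : ((n : ℕ∞) - 1 : ℕ∞) = ((n - 1 : ℕ) : ℕ∞) := by
    rw [ENat.coe_sub, Nat.cast_one]
  have hf2 : ContDiffOn ℝ ((n - 1 : ℕ) : ℕ∞) f S := by
    rw [← hcast] at *; exact_mod_cast hf'
  -- the points are in [m, M]
  have hmem : ∀ i : Fin n, x i ∈ Set.Icc m M := fun i =>
    ⟨hm ▸ Finset.inf'_le x (Finset.mem_univ i), hM ▸ Finset.le_sup' x (Finset.mem_univ i)⟩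
  -- m < M
  have hmM : m < M := by
    have h01 : x ⟨0, by omega⟩ ≠ x ⟨1, by omega⟩ := fun h => by
      have := hinj h; simp [Fin.mk.injEq] at this
    rcases lt_or_ge m M with h | h
    · exact h
    · exfalso
      have h0 := hmem ⟨0, by omega⟩
      have h1 := hmem ⟨1, by omega⟩
      have e0 : x ⟨0, by omega⟩ = m := le_antisymm (h0.2.trans h) h0.1
      have e1 : x ⟨1, by omega⟩ = m := le_antisymm (h1.2.trans h) h1.1
      exact h01 (e0.trans e1.symm)
  -- the interpolation polynomial
  set P : Polynomial ℝ := Lagrange.interpolate Finset.univ x (fun i => f (x i)) with hPdef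
  have hinjOn : Set.InjOn x (Finset.univ : Finset (Fin n)) := hinj.injOn
  have hcardu : (Finset.univ : Finset (Fin n)).card = n := by
    rw [Finset.card_univ, Fintype.card_fin]
  have hPdeg : P.natDegree ≤ n - 1 := by
    rw [Polynomial.natDegree_le_iff_degree_le]
    simpa [hcardu, hPdef] using Lagrange.degree_interpolate_le (fun i => f (x i)) hinjOn
  -- the coefficient of degree n-1 of P is the divided difference
  have hcoeff : P.coeff (n - 1) =
      ∑ i, f (x i) / (∏ j ∈ Finset.univ.erase i, (x i - x j)) := by
    rw [hPdef, Lagrange.interpolate_apply, Polynomial.finset_sum_coeff]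
    refine Finset.sum_congr rfl fun i _ => ?_
    rw [Polynomial.coeff_C_mul]
    have hb : (Lagrange.basis Finset.univ x i).natDegree = n - 1 := by
      rw [Lagrange.natDegree_basis hinjOn (Finset.mem_univ i), hcardu]
    have hlc : (Lagrange.basis Finset.univ x i).coeff (n - 1) =
        (∏ j ∈ Finset.univ.erase i, (x i - x j))⁻¹ := by
      rw [← hb, ← Polynomial.leadingCoeff, Lagrange.basis, Polynomial.leadingCoeff_prod,
        ← Finset.prod_inv_distrib]
      refine Finset.prod_congr rfl fun j hj => ?_
      have hne : x i - x j ≠ 0 := sub_ne_zero_of_ne (hinj.ne (Finset.ne_of_mem_erase hj).symm)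
      rw [Lagrange.basisDivisor, Polynomial.leadingCoeff_mul, Polynomial.leadingCoeff_X_sub_C,
        Polynomial.leadingCoeff_C, mul_one]
    rw [hlc, div_eq_mul_inv]
  -- the auxiliary function G
  set pe : ℝ → ℝ := fun y => Polynomial.eval y P with hpedef
  set G : ℝ → ℝ := f - pe with hGdef
  have hpeCD : ∀ k : ℕ, ContDiff ℝ k pe := fun k => contDiff_polyeval k P
  have hGCD : ContDiffOn ℝ ((n - 1 : ℕ) : ℕ∞) G S := hf2.sub ((hpeCD (n - 1)).contDiffOn)
  have hGcont : ContinuousOn G (Set.Icc m M) := hf.sub ((hpeCD 0).continuous.continuousOn)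
  have hGzero : ∀ i : Fin n, G (x i) = 0 := by
    intro i
    have := Lagrange.eval_interpolate_at_node (fun i => f (x i)) hinjOn (Finset.mem_univ i)
    simp only [hGdef, Pi.sub_apply, hpedef, hPdef]
    rw [this]
    ring
  -- continuity of iterated derivatives of G on S
  have hGiter : ∀ j : ℕ, j ≤ n - 1 → ContinuousOn (iteratedDeriv j G) S := by
    intro j hj
    have h1 : ContinuousOn (iteratedDerivWithin j G S) S :=
      hGCD.continuousOn_iteratedDerivWithin (by exact_mod_cast hj) hS.uniqueDiffOn
    exact ContinuousOn.congr h1 fun y hy => (iteratedDerivWithin_isOpen_eq hS j G hy).symm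
  -- first Rolle step on [m, M]
  set t0 : Finset ℝ := Finset.image x Finset.univ with ht0def
  have ht0card : t0.card = (n - 2) + 2 := by
    rw [ht0def, Finset.card_image_of_injective _ hinj, hcardu]; omega
  have ht0mem : ∀ y ∈ t0, y ∈ Set.Icc m M := by
    intro y hy
    obtain ⟨i, _, rfl⟩ := Finset.mem_image.mp hy
    exact hmem i
  obtain ⟨u, hucard, humem, huz⟩ := rolle_step G (n - 2) t0 ht0card
    (fun a ha b hb => hGcont.mono (Set.Icc_subset_Icc (ht0mem a ha).1 (ht0mem b hb).2))
    (fun y hy => by obtain ⟨i, _, rfl⟩ := Finset.mem_image.mp hy; exact hGzero i)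
  have husub : ∀ z ∈ u, z ∈ S := by
    intro z hzu
    obtain ⟨a, ha, b, hb, h1, h2⟩ := humem z hzu
    exact ⟨(ht0mem a ha).1.trans_lt h1, h2.trans_le (ht0mem b hb).2⟩
  -- iterated Rolle on deriv G
  obtain ⟨c, hcS, hc0⟩ := rolle_iter m M (n - 2) (deriv G)
    (fun j hj => by
      have h := hGiter (j + 1) (by omega)
      rwa [iteratedDeriv_succ'] at h)
    u (by omega) husub huz
  have hGzeroDeriv : iteratedDeriv (n - 1) G c = 0 := by
    have : n - 1 = (n - 2) + 1 := by omega
    rw [this, iteratedDeriv_succ']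
    exact hc0
  -- compute the (n-1)-st derivative of pe at c
  have hpederiv : iteratedDeriv (n - 1) pe c = (n - 1).factorial * P.coeff (n - 1) := by
    rw [hpedef, iteratedDeriv_polyeval]
    have hdeg : (Polynomial.derivative^[n - 1] P).natDegree ≤ 0 :=
      (Polynomial.natDegree_iterate_derivative P (n - 1)).trans (by omega)
    have heq := Polynomial.eq_C_of_natDegree_le_zero hdeg
    beta_reduce
    rw [heq, Polynomial.eval_C, Polynomial.coeff_iterate_derivative, zero_add,
      Nat.descFactorial_self, nsmul_eq_mul]
  -- split the iterated derivative of G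
  have hsplit : iteratedDerivWithin (n - 1) G S c =
      iteratedDerivWithin (n - 1) f S c - iteratedDerivWithin (n - 1) pe S c :=
    iteratedDerivWithin_sub hcS hS.uniqueDiffOn (by exact_mod_cast hf2 c hcS) ((hpeCD (n - 1)).contDiffWithinAt)
  have hGW : iteratedDerivWithin (n - 1) G S c = 0 :=
    (iteratedDerivWithin_isOpen_eq hS (n - 1) G hcS).trans hGzeroDeriv
  have hpeW : iteratedDerivWithin (n - 1) pe S c = (n - 1).factorial * P.coeff (n - 1) :=
    (iteratedDerivWithin_isOpen_eq hS (n - 1) pe hcS).trans hpederiv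
  refine ⟨c, hcS, ?_⟩
  have hfW : iteratedDerivWithin (n - 1) f S c = (n - 1).factorial * P.coeff (n - 1) := by
    have := hsplit
    rw [hGW, hpeW] at this
    linarith
  rw [hfW, ← hcoeff]
  have hfac : ((n - 1).factorial : ℝ) ≠ 0 := by
    exact_mod_cast (Nat.factorial_pos (n - 1)).ne'
  field_simp
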